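/- Let μ be a charge on 𝒜 with Stone extension μ̂, and let S = supp μ be the set of points x ∈ F all of whose open neighborhoods have positive μ̂-measure. Then μ has the additive property if and only if for every open set U ⊆ F one has μ̂(U ∩ S) = μ̂(cl(U ∩ S) ∩ S), where cl denotes closure in F (so cl(U ∩ S) ∩ S is the closure of U ∩ S in the subspace S). -/

import Mathlib

open Filter Topology MeasureTheory

variable {X : Type*}

/-- A field (algebra) of subsets of `X`. -/
def IsSetField (𝒜 : Set (Set X)) : Prop :=
  ∅ ∈ 𝒜 ∧ Set.univ ∈ 𝒜 ∧ (∀ A ∈ 𝒜, Aᶜ ∈ 𝒜) ∧ ∀ A ∈ 𝒜, ∀ B ∈ 𝒜, A ∪ B ∈ 𝒜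

/-- A σ-algebra of subsets of `X`. -/
def IsSigmaField (𝒜 : Set (Set X)) : Prop :=
  ∅ ∈ 𝒜 ∧ Set.univ ∈ 𝒜 ∧ (∀ A ∈ 𝒜, Aᶜ ∈ 𝒜) ∧
    ∀ A : ℕ → Set X, (∀ n, A n ∈ 𝒜) → (⋃ n, A n) ∈ 𝒜

/-- A (nonnegative, bounded) charge on the field `𝒜`: a nonnegative finitely
additive real-valued set function vanishing on `∅`. -/
def IsCharge (𝒜 : Set (Set X)) (μ : Set X → ℝ) : Prop :=
  μ ∅ = 0 ∧ (∀ A ∈ 𝒜, 0 ≤ μ A) ∧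
    ∀ A ∈ 𝒜, ∀ B ∈ 𝒜, Disjoint A B → μ (A ∪ B) = μ A + μ B

/-- `ν` is absolutely continuous w.r.t. `μ` (ε–δ sense), `ν ≪ μ`. -/
def AbsCont (𝒜 : Set (Set X)) (ν μ : Set X → ℝ) : Prop :=
  ∀ ε : ℝ, 0 < ε → ∃ δ : ℝ, 0 < δ ∧ ∀ A ∈ 𝒜, μ A < δ → ν A < ε

/-- `ν` is weakly absolutely continuous w.r.t. `μ`, `ν ≺ μ`. -/
def WeakAbsCont (𝒜 : Set (Set X)) (ν μ : Set X → ℝ) : Prop :=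
  ∀ A ∈ 𝒜, μ A = 0 → ν A = 0

/-- `μ` and `ν` are singular, `μ ⊥ ν`. -/
def Sing (𝒜 : Set (Set X)) (μ ν : Set X → ℝ) : Prop :=
  ∀ ε : ℝ, 0 < ε → ∃ D ∈ 𝒜, μ D < ε ∧ ν Dᶜ < ε

/-- `μ` and `ν` are strongly singular. -/
def StrongSing (𝒜 : Set (Set X)) (μ ν : Set X → ℝ) : Prop :=
  ∃ D ∈ 𝒜, μ D = 0 ∧ ν Dᶜ = 0

/-- The additive property of a charge: for every `ε > 0` and every increasing
sequence `Aᵢ` in `𝒜` there is `B ∈ 𝒜` with `μ B ≤ lim_i μ (A i) + ε` and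
`μ (A i \ B) = 0` for all `i`. -/
def HasAdditiveProperty (𝒜 : Set (Set X)) (μ : Set X → ℝ) : Prop :=
  ∀ ε : ℝ, 0 < ε → ∀ A : ℕ → Set X, (∀ i, A i ∈ 𝒜) → Monotone A →
    ∃ B ∈ 𝒜, ∃ L : ℝ, Tendsto (fun i => μ (A i)) atTop (𝓝 L) ∧
      μ B ≤ L + ε ∧ ∀ i, μ (A i \ B) = 0

/-- The support of a Borel measure: points all of whose open neighborhoods
have positive measure. -/
def msupp {F : Type*} [TopologicalSpace F] [MeasurableSpace F] (m : Measure F) : Set F :=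
  {x | ∀ U : Set F, IsOpen U → x ∈ U → 0 < m U}

section AuxLemmas

variable {F : Type*} [TopologicalSpace F]

/-- In a compact Hausdorff totally disconnected space, a compact set inside an
open set can be sandwiched by a clopen set. -/
lemma aux_clopen_sandwich [CompactSpace F] [T2Space F] [TotallyDisconnectedSpace F]
    {K U : Set F} (hK : IsCompact K) (hU : IsOpen U) (hKU : K ⊆ U) :
    ∃ C : Set F, IsClopen C ∧ K ⊆ C ∧ C ⊆ U := by
  have h : ∀ x ∈ K, ∃ V : Set F, IsClopen V ∧ x ∈ V ∧ V ⊆ U := fun x hx =>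
    compact_exists_isClopen_in_isOpen hU (hKU hx)
  choose! V hV1 hV2 hV3 using h
  obtain ⟨t, htK, hcover⟩ := hK.elim_nhds_subcover V
    (fun x hx => ((hV1 x hx).isOpen).mem_nhds (hV2 x hx))
  refine ⟨⋃ x ∈ t, V x, ?_, hcover, ?_⟩
  · exact isClopen_biUnion_finset fun x hx => hV1 x (htK x hx)
  · exact Set.iUnion₂_subset fun x hx => hV3 x (htK x hx)

variable [MeasurableSpace F]

lemma aux_isClosed_msupp (m : Measure F) : IsClosed (msupp m) := by
  rw [← isOpen_compl_iff, isOpen_iff_forall_mem_open]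
  intro x hx
  simp only [msupp, Set.mem_compl_iff, Set.mem_setOf_eq, not_forall] at hx
  obtain ⟨U, hU, hxU, hm0⟩ := hx
  have hm0' : m U = 0 := by simpa using hm0
  refine ⟨U, fun y hy => ?_, hU, hxU⟩
  simp only [msupp, Set.mem_compl_iff, Set.mem_setOf_eq, not_forall]
  exact ⟨U, hU, hy, by simp [hm0']⟩

lemma aux_msupp_compl_null (m : Measure F) [m.Regular] : m (msupp m)ᶜ = 0 := by
  by_contra h
  have hopen : IsOpen (msupp m)ᶜ := (aux_isClosed_msupp m).isOpen_compl
  have h0 : (0 : ENNReal) < m (msupp m)ᶜ := pos_iff_ne_zero.mpr h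
  obtain ⟨K, hKsub, hKcomp, hKpos⟩ := Measure.Regular.innerRegular (μ := m) hopen 0 h0
  have hex : ∀ x ∈ K, ∃ U : Set F, IsOpen U ∧ x ∈ U ∧ m U = 0 := by
    intro x hx
    have := hKsub hx
    simp only [msupp, Set.mem_compl_iff, Set.mem_setOf_eq, not_forall] at this
    obtain ⟨U, hU, hxU, hm0⟩ := this
    exact ⟨U, hU, hxU, by simpa using hm0⟩
  choose! V hVopen hVmem hVnull using hex
  obtain ⟨t, htK, hcover⟩ := hKcomp.elim_nhds_subcover V
    (fun x hx => (hVopen x hx).mem_nhds (hVmem x hx))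
  have hle : m K ≤ ∑ x ∈ t, m (V x) :=
    (measure_mono hcover).trans (measure_biUnion_finset_le _ _)
  have hzero : ∑ x ∈ t, m (V x) = 0 :=
    Finset.sum_eq_zero fun x hx => hVnull x (htK x hx)
  rw [hzero] at hle
  exact absurd (le_antisymm hle zero_le) hKpos.ne'

lemma aux_le_of_forall_nat (a b : ENNReal) (h : ∀ n : ℕ, a ≤ b + ((n : ENNReal) + 1)⁻¹) :
    a ≤ b := by
  refine ENNReal.le_of_forall_pos_le_add fun δ hδ _ => ?_
  obtain ⟨n, hn⟩ := ENNReal.exists_inv_nat_lt (ENNReal.coe_ne_zero.mpr hδ.ne')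
  refine (h n).trans (add_le_add_right ?_ b)
  exact le_of_lt (lt_of_le_of_lt (ENNReal.inv_le_inv.mpr le_self_add) hn)

lemma aux_eq_zero_of_forall_nat (a : ENNReal) (h : ∀ n : ℕ, a ≤ ((n : ENNReal) + 1)⁻¹) :
    a = 0 := by
  have := aux_le_of_forall_nat a 0 (by simpa using h)
  simpa using this

end AuxLemmas

/-- A charge `μ` has the additive property iff `μ̂ U = μ̂ (cl U)` for every open
set `U` of `supp μ` (closures taken inside the subspace `S = supp μ`). -/
theorem hasAdditiveProperty_iff_stone_open_closure
    {F : Type*} [TopologicalSpace F] [CompactSpace F] [T2Space F]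
    [TotallyDisconnectedSpace F] [Nonempty F] [MeasurableSpace F] [BorelSpace F]
    (𝒜 : Set (Set X)) (h𝒜 : IsSetField 𝒜)
    (μ : Set X → ℝ) (hμ : IsCharge 𝒜 μ)
    (φ : Set X → Set F)
    (hφ_inj : ∀ A ∈ 𝒜, ∀ B ∈ 𝒜, φ A = φ B → A = B)
    (hφ_clopen : ∀ A ∈ 𝒜, IsClopen (φ A))
    (hφ_surj : ∀ C : Set F, IsClopen C → ∃ A ∈ 𝒜, φ A = C)
    (hφ_empty : φ ∅ = ∅)
    (hφ_univ : φ Set.univ = Set.univ)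
    (hφ_union : ∀ A ∈ 𝒜, ∀ B ∈ 𝒜, φ (A ∪ B) = φ A ∪ φ B)
    (hφ_compl : ∀ A ∈ 𝒜, φ Aᶜ = (φ A)ᶜ)
    (μhat : Measure F) [IsFiniteMeasure μhat] [μhat.Regular]
    (hμhat : ∀ A ∈ 𝒜, μhat (φ A) = ENNReal.ofReal (μ A)) :
    HasAdditiveProperty 𝒜 μ ↔
      ∀ U : Set F, IsOpen U →
        μhat (U ∩ msupp μhat) = μhat (closure (U ∩ msupp μhat) ∩ msupp μhat) := by
  obtain ⟨hempty, huniv, hcompl, hunion⟩ := h𝒜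
  obtain ⟨hmuem, hμpos, hμadd⟩ := hμ
  set S := msupp μhat with hSdef
  have hSclosed : IsClosed S := aux_isClosed_msupp μhat
  have hSnull : μhat Sᶜ = 0 := aux_msupp_compl_null μhat
  have hfin : ∀ s : Set F, μhat s ≠ ⊤ := fun s => measure_ne_top μhat s
  have hinter : ∀ A ∈ 𝒜, ∀ B ∈ 𝒜, A ∩ B ∈ 𝒜 := by
    intro A hA B hB
    have h1 : A ∩ B = (Aᶜ ∪ Bᶜ)ᶜ := by rw [Set.compl_union, compl_compl, compl_compl]
    rw [h1]
    exact hcompl _ (hunion _ (hcompl _ hA) _ (hcompl _ hB))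
  have hdiff : ∀ A ∈ 𝒜, ∀ B ∈ 𝒜, A \ B ∈ 𝒜 := fun A hA B hB => by
    rw [Set.diff_eq]; exact hinter _ hA _ (hcompl _ hB)
  have hφdiff : ∀ A ∈ 𝒜, ∀ B ∈ 𝒜, φ (A \ B) = φ A \ φ B := by
    intro A hA B hB
    have h1 : A \ B = (Aᶜ ∪ B)ᶜ := by rw [Set.compl_union, compl_compl, Set.diff_eq]
    rw [h1, hφ_compl _ (hunion _ (hcompl _ hA) _ hB), hφ_union _ (hcompl _ hA) _ hB,
      hφ_compl _ hA, Set.compl_union, compl_compl, Set.diff_eq]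
  have hμtoReal : ∀ A ∈ 𝒜, (μhat (φ A)).toReal = μ A := fun A hA => by
    rw [hμhat A hA, ENNReal.toReal_ofReal (hμpos A hA)]
  have hUS : ∀ u : Set F, μhat (u ∩ S) = μhat u := by
    intro u
    refine le_antisymm (measure_mono Set.inter_subset_left) ?_
    calc μhat u ≤ μhat (u ∩ S) + μhat (u \ S) := measure_le_inter_add_diff _ _ _
      _ ≤ μhat (u ∩ S) + μhat Sᶜ :=
        add_le_add_right (measure_mono fun x hx => hx.2) _
      _ = μhat (u ∩ S) := by rw [hSnull, add_zero]
  constructor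
  · -- forward direction
    intro hAdd U hUopen
    refine le_antisymm (measure_mono fun x hx => ⟨subset_closure hx, hx.2⟩) ?_
    rw [hUS U]
    refine ENNReal.le_of_forall_pos_le_add fun ε hε _ => ?_
    -- approximating clopen sets
    have hex : ∀ n : ℕ, ∃ C : Set F, IsClopen C ∧ C ⊆ U ∧
        μhat U ≤ μhat C + ((n : ENNReal) + 1)⁻¹ := by
      intro n
      by_cases h0 : μhat U = 0
      · exact ⟨∅, isClopen_empty, Set.empty_subset _, by simp [h0]⟩
      · have hne : ((n : ENNReal) + 1)⁻¹ ≠ 0 :=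
          ENNReal.inv_ne_zero.mpr (by simp)
        have hlt : μhat U - ((n : ENNReal) + 1)⁻¹ < μhat U :=
          ENNReal.sub_lt_self (hfin U) h0 hne
        obtain ⟨K, hKU, hKcomp, hK⟩ :=
          Measure.Regular.innerRegular (μ := μhat) hUopen _ hlt
        obtain ⟨C, hCclopen, hKC, hCU⟩ := aux_clopen_sandwich hKcomp hUopen hKU
        refine ⟨C, hCclopen, hCU, ?_⟩
        exact tsub_le_iff_right.mp (hK.le.trans (measure_mono hKC))
    choose C hCclop hCU hCapprox using hex
    set D : ℕ → Set F := fun n => ⋃ i ∈ Finset.range (n + 1), C i with hDdef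
    have hDclop : ∀ n, IsClopen (D n) := fun n =>
      isClopen_biUnion_finset fun i _ => hCclop i
    have hDU : ∀ n, D n ⊆ U := fun n => Set.iUnion₂_subset fun i _ => hCU i
    have hDmono : Monotone D := fun a b hab =>
      Set.biUnion_subset_biUnion_left (Finset.range_mono (by omega))
    have hCD : ∀ n, C n ⊆ D n := fun n =>
      Set.subset_biUnion_of_mem (Finset.self_mem_range_succ n)
    have hDapprox : ∀ n, μhat U ≤ μhat (D n) + ((n : ENNReal) + 1)⁻¹ := fun n =>
      (hCapprox n).trans (add_le_add_left (measure_mono (hCD n)) _)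
    have hexA : ∀ n, ∃ A ∈ 𝒜, φ A = D n := fun n => hφ_surj _ (hDclop n)
    choose A hA𝒜 hφA using hexA
    have hAmono : Monotone A := by
      intro a b hab
      have h1 : φ (A a ∪ A b) = φ (A b) := by
        rw [hφ_union _ (hA𝒜 a) _ (hA𝒜 b), hφA, hφA,
          Set.union_eq_self_of_subset_left (hDmono hab)]
      have h2 := hφ_inj _ (hunion _ (hA𝒜 a) _ (hA𝒜 b)) _ (hA𝒜 b) h1
      exact Set.union_eq_right.mp h2
    obtain ⟨B, hB𝒜, L, hLtend, hBL, hABnull⟩ :=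
      hAdd (ε : ℝ) (by exact_mod_cast hε) A hA𝒜 hAmono
    -- identify the limit L
    have hμA : ∀ n, μ (A n) = (μhat (D n)).toReal := fun n => by
      rw [← hμtoReal _ (hA𝒜 n), hφA]
    have htendD : Tendsto (fun n => μhat (D n)) atTop (𝓝 (μhat (⋃ n, D n))) :=
      tendsto_measure_iUnion_atTop hDmono
    have hUnionD : μhat (⋃ n, D n) = μhat U := by
      refine le_antisymm (measure_mono (Set.iUnion_subset hDU)) ?_
      refine aux_le_of_forall_nat _ _ fun n => ?_
      exact (hDapprox n).trans
        (add_le_add_left (measure_mono (Set.subset_iUnion D n)) _)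
    have htendA : Tendsto (fun n => μ (A n)) atTop (𝓝 (μhat U).toReal) := by
      have h1 : Tendsto (fun n => (μhat (D n)).toReal) atTop (𝓝 (μhat (⋃ n, D n)).toReal) :=
        (ENNReal.tendsto_toReal (hfin _)).comp htendD
      rw [hUnionD] at h1
      refine h1.congr fun n => (hμA n).symm
    have hLeq : L = (μhat U).toReal := tendsto_nhds_unique hLtend htendA
    -- every clopen subset of U is almost inside φ B
    have hBnull : ∀ C' : Set F, IsClopen C' → C' ⊆ U → μhat (C' \ φ B) = 0 := by
      intro C' hC' hC'U
      refine aux_eq_zero_of_forall_nat _ fun n => ?_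
      have h1 : μhat (D n \ φ B) = 0 := by
        rw [← hφA n, ← hφdiff _ (hA𝒜 n) _ hB𝒜, hμhat _ (hdiff _ (hA𝒜 n) _ hB𝒜),
          hABnull n, ENNReal.ofReal_zero]
      have h2 : μhat (C' \ φ B) ≤ μhat (C' \ D n) + μhat (D n \ φ B) := by
        refine (measure_mono ?_).trans (measure_union_le _ _)
        intro x hx
        by_cases hxD : x ∈ D n
        · exact Or.inr ⟨hxD, hx.2⟩
        · exact Or.inl ⟨hx.1, hxD⟩
      rw [h1, add_zero] at h2
      refine h2.trans ?_
      have h3 : μhat (C' \ D n) + μhat (D n) = μhat (C' ∪ D n) := by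
        rw [← measure_union disjoint_sdiff_self_left (hDclop n).isOpen.measurableSet,
          Set.diff_union_self]
      have h4 : μhat (C' \ D n) + μhat (D n) ≤ ((n : ENNReal) + 1)⁻¹ + μhat (D n) := by
        rw [h3]
        calc μhat (C' ∪ D n) ≤ μhat U := measure_mono (Set.union_subset hC'U (hDU n))
          _ ≤ μhat (D n) + ((n : ENNReal) + 1)⁻¹ := hDapprox n
          _ = ((n : ENNReal) + 1)⁻¹ + μhat (D n) := add_comm _ _
      exact (ENNReal.add_le_add_iff_right (hfin (D n))).mp h4
    -- hence U ∩ S ⊆ φ B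
    have hUSB : U ∩ S ⊆ φ B := by
      intro x hx
      obtain ⟨V, hVclop, hxV, hVU⟩ := compact_exists_isClopen_in_isOpen hUopen hx.1
      by_contra hxB
      have hopen : IsOpen (V \ φ B) :=
        hVclop.isOpen.sdiff (hφ_clopen _ hB𝒜).isClosed
      have hxS : ∀ W : Set F, IsOpen W → x ∈ W → 0 < μhat W := hx.2
      exact absurd (hBnull V hVclop hVU) (hxS (V \ φ B) hopen ⟨hxV, hxB⟩).ne'
    have hclosure : closure (U ∩ S) ⊆ φ B :=
      closure_minimal hUSB (hφ_clopen _ hB𝒜).isClosed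
    calc μhat (closure (U ∩ S) ∩ S) ≤ μhat (φ B) :=
        measure_mono (Set.inter_subset_left.trans hclosure)
      _ = ENNReal.ofReal (μ B) := hμhat _ hB𝒜
      _ ≤ ENNReal.ofReal (L + (ε : ℝ)) := ENNReal.ofReal_le_ofReal hBL
      _ ≤ ENNReal.ofReal L + ENNReal.ofReal (ε : ℝ) := ENNReal.ofReal_add_le
      _ ≤ μhat U + (ε : ENNReal) := by
          rw [hLeq, ENNReal.ofReal_toReal (hfin U), ENNReal.ofReal_coe_nnreal]
  · -- reverse direction
    intro hyp ε hε A hA𝒜 hAmono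
    set D : ℕ → Set F := fun n => φ (A n) with hDdef
    have hDclop : ∀ n, IsClopen (D n) := fun n => hφ_clopen _ (hA𝒜 n)
    have hDmono : Monotone D := by
      intro a b hab
      have h1 : φ (A a) ∪ φ (A b) = φ (A b) := by
        rw [← hφ_union _ (hA𝒜 a) _ (hA𝒜 b),
          Set.union_eq_self_of_subset_left (hAmono hab)]
      exact Set.union_eq_right.mp h1
    set U := ⋃ n, D n with hUdef
    have hUopen : IsOpen U := isOpen_iUnion fun n => (hDclop n).isOpen
    have htendD : Tendsto (fun n => μhat (D n)) atTop (𝓝 (μhat U)) :=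
      tendsto_measure_iUnion_atTop hDmono
    have hμA : ∀ n, μ (A n) = (μhat (D n)).toReal := fun n => by
      rw [← hμtoReal _ (hA𝒜 n)]
    have htendA : Tendsto (fun n => μ (A n)) atTop (𝓝 (μhat U).toReal) := by
      have h1 : Tendsto (fun n => (μhat (D n)).toReal) atTop (𝓝 (μhat U).toReal) :=
        (ENNReal.tendsto_toReal (hfin _)).comp htendD
      exact h1.congr fun n => (hμA n).symm
    have hTcompact : IsCompact (closure (U ∩ S) ∩ S) :=
      ((isClosed_closure.inter hSclosed)).isCompact
    have hμT : μhat (closure (U ∩ S) ∩ S) = μhat U := by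
      rw [← hyp U hUopen, hUS]
    have hlt : μhat (closure (U ∩ S) ∩ S) < μhat U + ENNReal.ofReal ε := by
      rw [hμT]
      exact ENNReal.lt_add_right (hfin U)
        (by simpa [ENNReal.ofReal_eq_zero, not_le] using hε)
    obtain ⟨W, hTW, hWopen, hWlt⟩ := Set.exists_isOpen_lt_of_lt _ _ hlt
    obtain ⟨B', hB'clop, hTB', hB'W⟩ := aux_clopen_sandwich hTcompact hWopen hTW
    obtain ⟨B, hB𝒜, hφB⟩ := hφ_surj B' hB'clop
    refine ⟨B, hB𝒜, (μhat U).toReal, htendA, ?_, ?_⟩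
    · -- μ B ≤ L + ε
      have h3 : μhat B' < μhat U + ENNReal.ofReal ε :=
        lt_of_le_of_lt (measure_mono hB'W) hWlt
      have h4 : μ B = (μhat B').toReal := by
        rw [← hφB, ← hμtoReal _ hB𝒜]
      rw [h4]
      calc (μhat B').toReal ≤ (μhat U + ENNReal.ofReal ε).toReal :=
          ENNReal.toReal_mono
            (ENNReal.add_ne_top.mpr ⟨hfin U, ENNReal.ofReal_ne_top⟩) h3.le
        _ = (μhat U).toReal + ε := by
            rw [ENNReal.toReal_add (hfin U) ENNReal.ofReal_ne_top,
              ENNReal.toReal_ofReal hε.le]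
    · intro i
      have hsub : D i ∩ S ⊆ B' := fun x hx =>
        hTB' ⟨subset_closure ⟨Set.mem_iUnion.mpr ⟨i, hx.1⟩, hx.2⟩, hx.2⟩
      have hnull : μhat (φ (A i \ B)) = 0 := by
        rw [hφdiff _ (hA𝒜 i) _ hB𝒜, hφB]
        refine le_antisymm ?_ zero_le
        calc μhat (D i \ B') ≤ μhat Sᶜ :=
            measure_mono (fun x hx hxS => hx.2 (hsub ⟨hx.1, hxS⟩))
          _ = 0 := hSnull
      rw [hμhat _ (hdiff _ (hA𝒜 i) _ hB𝒜), ENNReal.ofReal_eq_zero] at hnull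
      exact le_antisymm hnull (hμpos _ (hdiff _ (hA𝒜 i) _ hB𝒜))
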